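/- In a Shamir (n,k)-threshold scheme over a finite field F with |F| > n, for any set of at most k−1 shares, the conditional distribution of the secret given those shares equals its prior distribution; in particular, if the secret is uniform on F, it remains uniform conditioned on any k−1 shares. -/

import Mathlib

/-- Shamir `(n,k)`-threshold confidentiality. A secret `s` is
encoded as the constant term of a uniformly random polynomial of degree `< k`
(coefficient vector `c : Fin k → F`), with share `i` being the evaluation at a
fixed nonzero point `x i` (points pairwise distinct, `|F| > n`). For any subset
`J` of at most `k-1` shares and any prescribed share values `y`, the number of
polynomials consistent with secret `s` and shares `y` is `|F|^(k-1-|J|)`,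
independently of `s` and `y`: hence the shares in `J` are uniformly
distributed and independent of the secret. -/
theorem shamir_confidentiality
    {F : Type*} [Field F] [Fintype F] [DecidableEq F]
    (n k : ℕ) (hk : 1 ≤ k) (hkn : k ≤ n)
    (hF : n < Fintype.card F)
    (x : Fin n → F) (hx : Function.Injective x) (hx0 : ∀ i, x i ≠ 0)
    (J : Finset (Fin n)) (hJ : J.card ≤ k - 1)
    (s : F) (y : Fin n → F) :
    Nat.card {c : Fin k → F //
        c ⟨0, hk⟩ = s ∧ ∀ j ∈ J, (∑ i : Fin k, c i * x j ^ (i : ℕ)) = y j}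
      = Fintype.card F ^ (k - 1 - J.card) := by
  classical
  -- the linear evaluation map
  let φ : (Fin k → F) →ₗ[F] F × ({j : Fin n // j ∈ J} → F) :=
  { toFun := fun c => (c ⟨0, hk⟩, fun j => ∑ i : Fin k, c i * x j ^ (i : ℕ))
    map_add' := fun c d => by
      simp [Prod.ext_iff, funext_iff, add_mul, Finset.sum_add_distrib]
    map_smul' := fun a c => by
      simp [Prod.ext_iff, funext_iff, mul_assoc, Finset.mul_sum] }
  have hJk : J.card + 1 ≤ k := by omega
  -- surjectivity via Lagrange interpolation
  have hsurj : Function.Surjective φ := by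
    rintro ⟨a, w⟩
    set v : Option {j : Fin n // j ∈ J} → F := fun o => o.elim 0 (fun j => x j) with hv
    have hvinj : Set.InjOn v (Finset.univ : Finset (Option {j : Fin n // j ∈ J})) := by
      rintro ⟨⟩ - ⟨⟩ - h
      · rfl
      · exact absurd h.symm (hx0 _)
      · exact absurd h (hx0 _)
      · simp only [hv, Option.elim] at h
        exact congrArg some (Subtype.ext (hx h))
    set r : Option {j : Fin n // j ∈ J} → F := fun o => o.elim a w with hr
    set p := Lagrange.interpolate Finset.univ v r with hp
    have hdeg : p.degree < (k : ℕ) := by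
      refine lt_of_lt_of_le (Lagrange.degree_interpolate_lt _ hvinj) ?_
      have : (Finset.univ : Finset (Option {j : Fin n // j ∈ J})).card = J.card + 1 := by
        simp only [Finset.card_univ, Fintype.card_option]
        rw [show Fintype.card {j : Fin n // j ∈ J} = J.card from Fintype.card_coe J]
      rw [this]
      exact_mod_cast Nat.cast_le.mpr hJk
    have hnd : p.natDegree < k := by
      rcases eq_or_ne p 0 with h0 | h0
      · simpa [h0] using Nat.lt_of_lt_of_le Nat.zero_lt_one hk
      · exact (Polynomial.natDegree_lt_iff_degree_lt h0).mpr hdeg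
    have heval : ∀ t : F, (∑ i : Fin k, p.coeff i * t ^ (i : ℕ)) = p.eval t := by
      intro t
      rw [Polynomial.eval_eq_sum_range' hnd]
      exact Fin.sum_univ_eq_sum_range (fun i => p.coeff i * t ^ i) k
    refine ⟨fun i => p.coeff i, ?_⟩
    have h0 : p.coeff 0 = a := by
      rw [Polynomial.coeff_zero_eq_eval_zero, hp]
      exact Lagrange.eval_interpolate_at_node (r := r) hvinj
        (Finset.mem_univ (none : Option {j : Fin n // j ∈ J}))
    have hws : ∀ j : {j : Fin n // j ∈ J}, p.eval (x j) = w j := by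
      intro j
      rw [hp]
      exact Lagrange.eval_interpolate_at_node (r := r) hvinj
        (Finset.mem_univ (some j : Option {j : Fin n // j ∈ J}))
    simp only [φ, LinearMap.coe_mk, AddHom.coe_mk, Prod.ext_iff]
    exact ⟨h0, funext fun j => (heval (x j)).trans (hws j)⟩
  -- rewrite the subtype as a fiber of φ
  set t : F × ({j : Fin n // j ∈ J} → F) := (s, fun j => y j) with ht
  have hcong : Nat.card {c : Fin k → F //
        c ⟨0, hk⟩ = s ∧ ∀ j ∈ J, (∑ i : Fin k, c i * x j ^ (i : ℕ)) = y j}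
      = Nat.card {c : Fin k → F // φ c = t} := by
    refine Nat.card_congr (Equiv.subtypeEquivRight fun c => ?_)
    simp only [φ, t, LinearMap.coe_mk, AddHom.coe_mk, Prod.ext_iff, funext_iff]
    exact ⟨fun h => ⟨h.1, fun j => h.2 j j.2⟩,
      fun h => ⟨h.1, fun j hj => h.2 ⟨j, hj⟩⟩⟩
  rw [hcong]
  -- the fiber is in bijection with the kernel
  obtain ⟨c₀, hc₀⟩ := hsurj t
  have hker : Nat.card {c : Fin k → F // φ c = t}
      = Nat.card (LinearMap.ker φ) := by
    refine Nat.card_congr ⟨fun c => ⟨c.1 - c₀, ?_⟩, fun c => ⟨c.1 + c₀, ?_⟩,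
      fun c => by simp, fun c => by simp⟩
    · simp [LinearMap.mem_ker, map_sub, c.2, hc₀]
    · simp [map_add, hc₀, (LinearMap.mem_ker.mp c.2)]
  rw [hker]
  -- rank-nullity
  have hrange : LinearMap.range φ = ⊤ := LinearMap.range_eq_top.mpr hsurj
  have hrn := LinearMap.finrank_range_add_finrank_ker φ
  have hdom : Module.finrank F (Fin k → F) = k := by simp
  have hcod : Module.finrank F (LinearMap.range φ) = J.card + 1 := by
    rw [hrange, finrank_top, Module.finrank_prod, Module.finrank_self,
      Module.finrank_pi]
    rw [Fintype.card_coe J, Nat.add_comm]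
  rw [hcod, hdom] at hrn
  have hfr : Module.finrank F (LinearMap.ker φ) = k - 1 - J.card := by
    rw [Nat.sub_sub, Nat.add_comm 1 J.card]
    exact Nat.eq_sub_of_add_eq' hrn
  have : Nat.card (LinearMap.ker φ) = Fintype.card F ^
      Module.finrank F (LinearMap.ker φ) := by
    rw [Nat.card_eq_fintype_card]
    exact Module.card_eq_pow_finrank
  rw [this, hfr]
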